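/- With a(t) = c₁t + c₂ (c₁ ≠ 0), f(t) = (c₁c₃²t + c₅)/(c₁t + c₂), g(t) = c₃ + c₁c₄/(c₁t + c₂), the functions a, f, g satisfy the consistency ODE system a²f'' + a a'f' + a²g'² − a'²f + a'²g² + 2a a' g g' = 0, a a''f + a'²f − 2a a' g g' + a a'f' − a²g'² − a'²g² = 0, a²fg'' − a a'f'g + a²g g'² − a'²fg + a'²g³ + 2a a' g'g² + 2a a'fg' = 0, on the domain where c₁t + c₂ ≠ 0. -/

import Mathlib

set_option maxHeartbeats 1600000


/-- The consistency ODE system (equations (22) of the paper) for `a f g : ℝ → ℝ`. -/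
def ConsistencyODE (a f g : ℝ → ℝ) (t : ℝ) : Prop :=
  (a t) ^ 2 * deriv (deriv f) t + a t * deriv a t * deriv f t + (a t) ^ 2 * (deriv g t) ^ 2
    - (deriv a t) ^ 2 * f t + (deriv a t) ^ 2 * (g t) ^ 2
    + 2 * a t * deriv a t * g t * deriv g t = 0 ∧
  a t * deriv (deriv a) t * f t + (deriv a t) ^ 2 * f t - 2 * a t * deriv a t * g t * deriv g t
    + a t * deriv a t * deriv f t - (a t) ^ 2 * (deriv g t) ^ 2
    - (deriv a t) ^ 2 * (g t) ^ 2 = 0 ∧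
  (a t) ^ 2 * f t * deriv (deriv g) t - a t * deriv a t * deriv f t * g t
    + (a t) ^ 2 * g t * (deriv g t) ^ 2 - (deriv a t) ^ 2 * f t * g t
    + (deriv a t) ^ 2 * (g t) ^ 3 + 2 * a t * deriv a t * deriv g t * (g t) ^ 2
    + 2 * a t * deriv a t * f t * deriv g t = 0

section aux

variable (c₁ c₂ c₃ c₄ c₅ : ℝ)

lemma hasA (s : ℝ) : HasDerivAt (fun t : ℝ => c₁ * t + c₂) c₁ s := by
  simpa using ((hasDerivAt_id s).const_mul c₁).add_const c₂

lemma hasF {s : ℝ} (hs : c₁ * s + c₂ ≠ 0) :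
    HasDerivAt (fun t => (c₁ * c₃ ^ 2 * t + c₅) / (c₁ * t + c₂))
      (c₁ * (c₂ * c₃ ^ 2 - c₅) / (c₁ * s + c₂) ^ 2) s := by
  have hN : HasDerivAt (fun t : ℝ => c₁ * c₃ ^ 2 * t + c₅) (c₁ * c₃ ^ 2) s := by
    simpa using ((hasDerivAt_id s).const_mul (c₁ * c₃ ^ 2)).add_const c₅
  have := hN.fun_div (hasA c₁ c₂ s) hs
  convert this using 1
  · rfl
  · rfl
  field_simp
  ring

lemma hasF' {s : ℝ} (hs : c₁ * s + c₂ ≠ 0) :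
    HasDerivAt (fun t => c₁ * (c₂ * c₃ ^ 2 - c₅) / (c₁ * t + c₂) ^ 2)
      (-2 * c₁ ^ 2 * (c₂ * c₃ ^ 2 - c₅) / (c₁ * s + c₂) ^ 3) s := by
  have hD : HasDerivAt (fun t : ℝ => (c₁ * t + c₂) ^ 2) (2 * (c₁ * s + c₂) * c₁) s := by
    simpa [mul_comm, mul_assoc] using (hasA c₁ c₂ s).fun_pow 2
  have := (hasDerivAt_const s (c₁ * (c₂ * c₃ ^ 2 - c₅))).fun_div hD (pow_ne_zero 2 hs)
  convert this using 1
  · rfl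
  · rfl
  field_simp
  ring

lemma hasG {s : ℝ} (hs : c₁ * s + c₂ ≠ 0) :
    HasDerivAt (fun t => c₃ + c₁ * c₄ / (c₁ * t + c₂))
      (-(c₁ ^ 2 * c₄) / (c₁ * s + c₂) ^ 2) s := by
  have := ((hasDerivAt_const s (c₁ * c₄)).fun_div (hasA c₁ c₂ s) hs).const_add c₃
  convert this using 1
  · rfl
  · rfl
  field_simp
  ring

lemma hasG' {s : ℝ} (hs : c₁ * s + c₂ ≠ 0) :
    HasDerivAt (fun t => -(c₁ ^ 2 * c₄) / (c₁ * t + c₂) ^ 2)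
      (2 * c₁ ^ 3 * c₄ / (c₁ * s + c₂) ^ 3) s := by
  have hD : HasDerivAt (fun t : ℝ => (c₁ * t + c₂) ^ 2) (2 * (c₁ * s + c₂) * c₁) s := by
    simpa [mul_comm, mul_assoc] using (hasA c₁ c₂ s).fun_pow 2
  have := (hasDerivAt_const s (-(c₁ ^ 2 * c₄))).fun_div hD (pow_ne_zero 2 hs)
  convert this using 1
  · rfl
  · rfl
  field_simp
  ring

end aux

theorem stmt18 (c₁ c₂ c₃ c₄ c₅ : ℝ) (hc₁ : c₁ ≠ 0) :
    ∀ t : ℝ, c₁ * t + c₂ ≠ 0 →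
      ConsistencyODE (fun t => c₁ * t + c₂)
        (fun t => (c₁ * c₃ ^ 2 * t + c₅) / (c₁ * t + c₂))
        (fun t => c₃ + c₁ * c₄ / (c₁ * t + c₂)) t := by
  intro t ht
  have hev : ∀ᶠ s in nhds t, c₁ * s + c₂ ≠ 0 := by
    have hc : Continuous fun s : ℝ => c₁ * s + c₂ := by continuity
    exact hc.continuousAt.eventually_ne ht
  -- first derivatives as functions, eventually
  have hda : deriv (fun t : ℝ => c₁ * t + c₂) = fun _ => c₁ := by
    funext s; exact (hasA c₁ c₂ s).deriv
  have hdf : deriv (fun t => (c₁ * c₃ ^ 2 * t + c₅) / (c₁ * t + c₂)) =ᶠ[nhds t]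
      fun s => c₁ * (c₂ * c₃ ^ 2 - c₅) / (c₁ * s + c₂) ^ 2 :=
    hev.mono fun s hs => (hasF c₁ c₂ c₃ c₅ hs).deriv
  have hdg : deriv (fun t => c₃ + c₁ * c₄ / (c₁ * t + c₂)) =ᶠ[nhds t]
      fun s => -(c₁ ^ 2 * c₄) / (c₁ * s + c₂) ^ 2 :=
    hev.mono fun s hs => (hasG c₁ c₂ c₃ c₄ hs).deriv
  have hddf : deriv (deriv (fun t => (c₁ * c₃ ^ 2 * t + c₅) / (c₁ * t + c₂))) t
      = -2 * c₁ ^ 2 * (c₂ * c₃ ^ 2 - c₅) / (c₁ * t + c₂) ^ 3 := by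
    rw [hdf.deriv_eq]; exact (hasF' c₁ c₂ c₃ c₅ ht).deriv
  have hddg : deriv (deriv (fun t => c₃ + c₁ * c₄ / (c₁ * t + c₂))) t
      = 2 * c₁ ^ 3 * c₄ / (c₁ * t + c₂) ^ 3 := by
    rw [hdg.deriv_eq]; exact (hasG' c₁ c₂ c₄ ht).deriv
  have hdda : deriv (deriv (fun t : ℝ => c₁ * t + c₂)) t = 0 := by
    rw [hda]; simp
  refine ⟨?_, ?_, ?_⟩ <;>
    simp only [hda, hdf.self_of_nhds, hdg.self_of_nhds, hddf, hddg, hdda, deriv_const] <;>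
    field_simp <;> ring
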